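/- Let ξ₁, ξ₂ : ℝ → ℝ be twice differentiable and define Ã₀ : ℝ × ℝ → M(2,ℝ) by Ã₀(s,z) = R(ξ₁(s))·diag(1, tanh(z/√2))·R(ξ₂(s))ᵀ, where R(θ) is the 2 × 2 rotation matrix. Then for every s ∈ ℝ, the function z ↦ ⟨∂_s²Ã₀(s,z), ∂_zÃ₀(s,z)⟩_F is integrable over ℝ and ∫_ℝ ⟨∂_s²Ã₀(s,z), ∂_zÃ₀(s,z)⟩_F dz = 4·ξ₁'(s)·ξ₂'(s). In particular, if ξ₁ = (η₋ + η₊)/2 and ξ₂ = (η₋ − η₊)/2 for differentiable functions η₋, η₊ : ℝ → ℝ, this integral equals (η₋'(s))² − (η₊'(s))², the jump in the squared tangential derivative of the phase across the interface. -/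

import Mathlib

open Matrix MeasureTheory

attribute [local instance] Matrix.frobeniusNormedAddCommGroup Matrix.frobeniusNormedSpace

open Real Filter Topology Set in
lemma my_hasDerivAt_tanh (x : ℝ) : HasDerivAt Real.tanh (1 - Real.tanh x ^ 2) x := by
  have h := (Real.hasDerivAt_sinh x).div (Real.hasDerivAt_cosh x) (Real.cosh_pos x).ne'
  have hfun : Real.tanh = Real.sinh / Real.cosh :=
    funext fun y => Real.tanh_eq_sinh_div_cosh y
  rw [← hfun] at h
  refine h.congr_deriv ?_
  rw [Real.tanh_eq_sinh_div_cosh]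
  have hc := (Real.cosh_pos x).ne'
  field_simp

lemma my_abs_tanh_le (x : ℝ) : |Real.tanh x| ≤ 1 := by
  rw [Real.tanh_eq_sinh_div_cosh, abs_div, abs_of_pos (Real.cosh_pos x),
    div_le_one (Real.cosh_pos x)]
  nlinarith [Real.cosh_sq_sub_sinh_sq x, abs_nonneg (Real.sinh x), sq_abs (Real.sinh x),
    Real.cosh_pos x]

lemma tanh_eq_exp' (x : ℝ) :
    Real.tanh x = (1 - Real.exp (-(2*x))) / (1 + Real.exp (-(2*x))) := by
  rw [Real.tanh_eq_sinh_div_cosh, Real.sinh_eq, Real.cosh_eq]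
  have h1 : Real.exp (-(2*x)) = Real.exp (-x) * Real.exp (-x) := by
    rw [← Real.exp_add]; ring_nf
  have h2 : Real.exp x * Real.exp (-x) = 1 := by rw [← Real.exp_add]; simp
  have h3 : (0:ℝ) < 1 + Real.exp (-(2*x)) := by positivity
  have h4 : (0:ℝ) < (Real.exp x + Real.exp (-x)) / 2 := by positivity
  rw [div_eq_div_iff h4.ne' h3.ne']
  linear_combination Real.exp x * h1 + Real.exp (-x) * h2

open Filter Topology in
lemma tendsto_tanh_atTop' : Tendsto Real.tanh atTop (𝓝 1) := by
  have h0 : Tendsto (fun x : ℝ => Real.exp (-(2*x))) atTop (𝓝 0) := by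
    apply Real.tendsto_exp_neg_atTop_nhds_zero.comp
    exact (tendsto_id.const_mul_atTop (by norm_num : (0:ℝ) < 2))
  have h : Tendsto (fun x : ℝ => (1 - Real.exp (-(2*x))) / (1 + Real.exp (-(2*x)))) atTop
      (𝓝 ((1-0)/(1+0))) :=
    Tendsto.div (tendsto_const_nhds.sub h0) (tendsto_const_nhds.add h0) (by norm_num)
  simp only [sub_zero, add_zero, div_one] at h
  exact h.congr fun x => (tanh_eq_exp' x).symm

open Filter Topology in
lemma tendsto_tanh_atBot' : Tendsto Real.tanh atBot (𝓝 (-1)) := by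
  have h := (tendsto_tanh_atTop'.comp tendsto_neg_atBot_atTop).neg
  simp only [Function.comp] at h
  refine h.congr fun x => ?_
  rw [Real.tanh_neg, neg_neg]

/-- The profile `tanh(z/√2)`. -/
noncomputable def tth (z : ℝ) : ℝ := Real.tanh (z / Real.sqrt 2)

/-- The derivative of `tth`. -/
noncomputable def Td (z : ℝ) : ℝ := (1 - Real.tanh (z / Real.sqrt 2) ^ 2) * (1 / Real.sqrt 2)

lemma tanh_sq_le (x : ℝ) : Real.tanh x ^ 2 ≤ 1 := by
  have h := my_abs_tanh_le x
  rw [← sq_abs]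
  nlinarith [abs_nonneg (Real.tanh x)]

lemma hasDerivAt_tth (z : ℝ) : HasDerivAt tth (Td z) z := by
  have h := (my_hasDerivAt_tanh (z / Real.sqrt 2)).comp z
    ((hasDerivAt_id z).div_const (Real.sqrt 2))
  exact h

lemma Td_nonneg (z : ℝ) : 0 ≤ Td z := by
  have h2 := tanh_sq_le (z / Real.sqrt 2)
  have h3 : (0:ℝ) < Real.sqrt 2 := by positivity
  have h4 : 0 ≤ 1 - Real.tanh (z / Real.sqrt 2) ^ 2 := by linarith
  exact mul_nonneg h4 (by positivity)

open Filter Topology in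
lemma tendsto_tth_atTop : Tendsto tth atTop (𝓝 1) :=
  tendsto_tanh_atTop'.comp (Tendsto.atTop_div_const (by positivity) tendsto_id)

open Filter Topology in
lemma tendsto_tth_atBot : Tendsto tth atBot (𝓝 (-1)) := by
  have h3 : (0:ℝ) < Real.sqrt 2 := by positivity
  exact tendsto_tanh_atBot'.comp (Tendsto.atBot_div_const h3 tendsto_id)

lemma Td_even (z : ℝ) : Td (-z) = Td z := by
  simp [Td, neg_div, Real.tanh_neg]

lemma continuous_tanh' : Continuous Real.tanh := by
  have h : Real.tanh = fun x => Real.sinh x / Real.cosh x :=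
    funext fun y => Real.tanh_eq_sinh_div_cosh y
  rw [h]
  exact Real.continuous_sinh.div Real.continuous_cosh fun x => (Real.cosh_pos x).ne'

lemma continuous_Td : Continuous Td := by
  unfold Td
  have h : Continuous fun z : ℝ => Real.tanh (z / Real.sqrt 2) :=
    continuous_tanh'.comp (continuous_id.div_const _)
  continuity

lemma continuous_tth : Continuous tth :=
  continuous_tanh'.comp (continuous_id.div_const _)

open Set in
lemma integrable_Td : Integrable Td := by
  have hIoi : IntegrableOn Td (Ioi 0) :=
    integrableOn_Ioi_deriv_of_nonneg' (fun x _ => hasDerivAt_tth x)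
      (fun x _ => Td_nonneg x) tendsto_tth_atTop
  have hIio : IntegrableOn Td (Iio 0) := by
    have h := (MeasurePreserving.integrableOn_comp_preimage
      (Measure.measurePreserving_neg (volume : Measure ℝ))
      (Homeomorph.neg ℝ).measurableEmbedding).2 hIoi
    have hs : (fun x : ℝ => -x) ⁻¹' (Ioi 0) = Iio 0 := by ext x; simp
    rw [hs] at h
    exact h.congr_fun (fun x _ => Td_even x) measurableSet_Iio
  rw [← integrableOn_univ, ← Set.Iic_union_Ioi (a := (0:ℝ))]
  exact ((integrableOn_Iic_iff_integrableOn_Iio (by simp)).2 hIio).union hIoi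

lemma integrable_tth_Td : Integrable (fun z => tth z * Td z) := by
  refine integrable_Td.mono ((continuous_tth.mul continuous_Td).aestronglyMeasurable) ?_
  filter_upwards with z
  rw [Real.norm_eq_abs, Real.norm_eq_abs, abs_mul, abs_of_nonneg (Td_nonneg z)]
  have h : |tth z| ≤ 1 := my_abs_tanh_le (z / Real.sqrt 2)
  nlinarith [abs_nonneg (tth z), Td_nonneg z]

lemma integral_Td : ∫ z, Td z = 2 := by
  have h := integral_of_hasDerivAt_of_tendsto (f := tth) (f' := Td)
    (fun x => hasDerivAt_tth x) integrable_Td tendsto_tth_atBot tendsto_tth_atTop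
  rw [h]; norm_num

lemma integral_tth_Td : ∫ z, tth z * Td z = 0 := by
  have hd : ∀ x, HasDerivAt (fun z => tth z ^ 2 / 2) (tth x * Td x) x := by
    intro x
    have h := ((hasDerivAt_tth x).pow 2).div_const 2
    exact h.congr_deriv (by norm_num; ring)
  have hb : Filter.Tendsto (fun z => tth z ^ 2 / 2) Filter.atBot (nhds ((-1)^2/2)) :=
    ((tendsto_tth_atBot.pow 2).div_const 2)
  have ht : Filter.Tendsto (fun z => tth z ^ 2 / 2) Filter.atTop (nhds (1^2/2)) :=
    ((tendsto_tth_atTop.pow 2).div_const 2)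
  have h := integral_of_hasDerivAt_of_tendsto hd integrable_tth_Td hb ht
  rw [h]; norm_num

lemma mat2_decomp (a b c d : ℝ) :
    !![a, b; c, d] = a • !![(1:ℝ),0;0,0] + b • !![0,1;0,0] + c • !![0,0;1,0] + d • !![0,0;0,1] := by
  ext i j
  fin_cases i <;> fin_cases j <;> simp

lemma hasDerivAt_mat2 {a b c d : ℝ → ℝ} {a' b' c' d' : ℝ} {x : ℝ}
    (ha : HasDerivAt a a' x) (hb : HasDerivAt b b' x)
    (hc : HasDerivAt c c' x) (hd : HasDerivAt d d' x) :
    HasDerivAt (fun y => !![a y, b y; c y, d y]) !![a', b'; c', d'] x := by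
  have h : (fun y => !![a y, b y; c y, d y]) = fun y =>
      a y • !![(1:ℝ),0;0,0] + b y • !![0,1;0,0] + c y • !![0,0;1,0] + d y • !![0,0;0,1] :=
    funext fun y => mat2_decomp _ _ _ _
  rw [h, mat2_decomp a' b' c' d']
  exact (((ha.smul_const _).add (hb.smul_const _)).add (hc.smul_const _)).add (hd.smul_const _)

/-- The `s`-derivative of the profile matrix. -/
noncomputable def Bm (ξ₁ ξ₂ : ℝ → ℝ) (s z : ℝ) : Matrix (Fin 2) (Fin 2) ℝ :=
  let p := deriv ξ₁ s; let q := deriv ξ₂ s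
  let c1 := Real.cos (ξ₁ s); let s1 := Real.sin (ξ₁ s)
  let c2 := Real.cos (ξ₂ s); let s2 := Real.sin (ξ₂ s)
  !![-(p*s1*c2) - q*c1*s2 + tth z*(p*c1*s2 + q*s1*c2),
     -(p*s1*s2) + q*c1*c2 - tth z*(p*c1*c2 - q*s1*s2);
     p*c1*c2 - q*s1*s2 - tth z*(-(p*s1*s2) + q*c1*c2),
     p*c1*s2 + q*s1*c2 + tth z*(-(p*s1*c2) - q*c1*s2)]

/-- The second `s`-derivative of the profile matrix. -/
noncomputable def Cm (ξ₁ ξ₂ : ℝ → ℝ) (s z : ℝ) : Matrix (Fin 2) (Fin 2) ℝ :=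
  let p := deriv ξ₁ s; let q := deriv ξ₂ s
  let p2 := deriv (deriv ξ₁) s; let q2 := deriv (deriv ξ₂) s
  let c1 := Real.cos (ξ₁ s); let s1 := Real.sin (ξ₁ s)
  let c2 := Real.cos (ξ₂ s); let s2 := Real.sin (ξ₂ s)
  !![-(p2*s1*c2 + p*p*c1*c2 - p*q*s1*s2) - (q2*c1*s2 - q*p*s1*s2 + q*q*c1*c2)
       + tth z*(p2*c1*s2 - p*p*s1*s2 + p*q*c1*c2 + q2*s1*c2 + q*p*c1*c2 - q*q*s1*s2),
     -(p2*s1*s2 + p*p*c1*s2 + p*q*s1*c2) + (q2*c1*c2 - q*p*s1*c2 - q*q*c1*s2)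
       - tth z*(p2*c1*c2 - p*p*s1*c2 - p*q*c1*s2 - (q2*s1*s2 + q*p*c1*s2 + q*q*s1*c2));
     (p2*c1*c2 - p*p*s1*c2 - p*q*c1*s2) - (q2*s1*s2 + q*p*c1*s2 + q*q*s1*c2)
       - tth z*(-(p2*s1*s2 + p*p*c1*s2 + p*q*s1*c2) + (q2*c1*c2 - q*p*s1*c2 - q*q*c1*s2)),
     (p2*c1*s2 - p*p*s1*s2 + p*q*c1*c2) + (q2*s1*c2 + q*p*c1*c2 - q*q*s1*s2)
       + tth z*(-(p2*s1*c2 + p*p*c1*c2 - p*q*s1*s2) - (q2*c1*s2 - q*p*s1*s2 + q*q*c1*c2))]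

/-- The `z`-derivative of the profile matrix. -/
noncomputable def Dm (ξ₁ ξ₂ : ℝ → ℝ) (s z : ℝ) : Matrix (Fin 2) (Fin 2) ℝ :=
  let c1 := Real.cos (ξ₁ s); let s1 := Real.sin (ξ₁ s)
  let c2 := Real.cos (ξ₂ s); let s2 := Real.sin (ξ₂ s)
  !![Td z*(s1*s2), Td z*(-(s1*c2)); Td z*(-(c1*s2)), Td z*(c1*c2)]

/-- The `2 × 2` rotation matrix of angle `θ`. -/
noncomputable def rot (θ : ℝ) : Matrix (Fin 2) (Fin 2) ℝ :=
  !![Real.cos θ, -Real.sin θ; Real.sin θ, Real.cos θ]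

/-- The computational core of Proposition 3.3: for the transition profile
`Ã₀(s,z) = R(ξ₁(s)) diag(1, tanh(z/√2)) R(ξ₂(s))ᵀ`,
`∫_ℝ ⟨∂_s² Ã₀, ∂_z Ã₀⟩_F dz = 4 ξ₁'(s) ξ₂'(s)`; in particular, for
`ξ₁ = (η₋+η₊)/2` and `ξ₂ = (η₋−η₊)/2` it equals `(η₋')² − (η₊')²`, the jump in the
squared tangential derivative of the phase across the interface. -/
theorem stmt13 (ξ₁ ξ₂ : ℝ → ℝ)
    (hξ₁ : ∀ s : ℝ, HasDerivAt ξ₁ (deriv ξ₁ s) s)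
    (hξ₁' : ∀ s : ℝ, HasDerivAt (deriv ξ₁) (deriv (deriv ξ₁) s) s)
    (hξ₂ : ∀ s : ℝ, HasDerivAt ξ₂ (deriv ξ₂ s) s)
    (hξ₂' : ∀ s : ℝ, HasDerivAt (deriv ξ₂) (deriv (deriv ξ₂) s) s)
    (A : ℝ → ℝ → Matrix (Fin 2) (Fin 2) ℝ)
    (hA : ∀ s z : ℝ,
      A s z = rot (ξ₁ s) * Matrix.diagonal ![1, Real.tanh (z / Real.sqrt 2)] * (rot (ξ₂ s))ᵀ) :
    (∀ s : ℝ,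
        Integrable (fun z : ℝ =>
          Matrix.trace ((deriv (fun s' => deriv (fun s'' => A s'' z) s') s)ᵀ *
            deriv (fun z' => A s z') z)) ∧
        (∫ z : ℝ,
            Matrix.trace ((deriv (fun s' => deriv (fun s'' => A s'' z) s') s)ᵀ *
              deriv (fun z' => A s z') z)) = 4 * deriv ξ₁ s * deriv ξ₂ s) ∧
      ∀ ηm ηp : ℝ → ℝ, (∀ s : ℝ, HasDerivAt ηm (deriv ηm s) s) →
        (∀ s : ℝ, HasDerivAt ηp (deriv ηp s) s) →
        (ξ₁ = fun s => (ηm s + ηp s) / 2) → (ξ₂ = fun s => (ηm s - ηp s) / 2) →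
        ∀ s : ℝ,
          (∫ z : ℝ,
              Matrix.trace ((deriv (fun s' => deriv (fun s'' => A s'' z) s') s)ᵀ *
                deriv (fun z' => A s z') z)) = deriv ηm s ^ 2 - deriv ηp s ^ 2 := by
  have hA' : ∀ s z : ℝ, A s z =
      !![Real.cos (ξ₁ s) * Real.cos (ξ₂ s) + tth z * (Real.sin (ξ₁ s) * Real.sin (ξ₂ s)),
         Real.cos (ξ₁ s) * Real.sin (ξ₂ s) - tth z * (Real.sin (ξ₁ s) * Real.cos (ξ₂ s));
         Real.sin (ξ₁ s) * Real.cos (ξ₂ s) - tth z * (Real.cos (ξ₁ s) * Real.sin (ξ₂ s)),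
         Real.sin (ξ₁ s) * Real.sin (ξ₂ s) + tth z * (Real.cos (ξ₁ s) * Real.cos (ξ₂ s))] := by
    intro s z
    rw [hA]
    ext i j
    fin_cases i <;> fin_cases j <;>
      simp [rot, tth, Matrix.mul_apply, Fin.sum_univ_two, Matrix.diagonal, Matrix.vecHead,
        Matrix.vecTail, Matrix.transpose_apply, Function.comp] <;> ring
  have main : ∀ s : ℝ,
      Integrable (fun z : ℝ =>
        Matrix.trace ((deriv (fun s' => deriv (fun s'' => A s'' z) s') s)ᵀ *
          deriv (fun z' => A s z') z)) ∧
      (∫ z : ℝ,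
          Matrix.trace ((deriv (fun s' => deriv (fun s'' => A s'' z) s') s)ᵀ *
            deriv (fun z' => A s z') z)) = 4 * deriv ξ₁ s * deriv ξ₂ s := by
    intro s
    -- the z-derivative
    have hDz : deriv (fun z' => A s z') = fun z => Dm ξ₁ ξ₂ s z := by
      funext z
      have hfun : (fun z' => A s z') = fun z' =>
          !![Real.cos (ξ₁ s) * Real.cos (ξ₂ s) + tth z' * (Real.sin (ξ₁ s) * Real.sin (ξ₂ s)),
             Real.cos (ξ₁ s) * Real.sin (ξ₂ s) - tth z' * (Real.sin (ξ₁ s) * Real.cos (ξ₂ s));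
             Real.sin (ξ₁ s) * Real.cos (ξ₂ s) - tth z' * (Real.cos (ξ₁ s) * Real.sin (ξ₂ s)),
             Real.sin (ξ₁ s) * Real.sin (ξ₂ s) + tth z' * (Real.cos (ξ₁ s) * Real.cos (ξ₂ s))] :=
        funext fun z' => hA' s z'
      rw [hfun]
      refine HasDerivAt.deriv ?_
      simp only [Dm]
      refine hasDerivAt_mat2 ?_ ?_ ?_ ?_
      · exact (((hasDerivAt_tth z).mul_const _).const_add _).congr_deriv (by ring)
      · exact (HasDerivAt.const_sub _ ((hasDerivAt_tth z).mul_const _)).congr_deriv (by ring)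
      · exact (HasDerivAt.const_sub _ ((hasDerivAt_tth z).mul_const _)).congr_deriv (by ring)
      · exact (((hasDerivAt_tth z).mul_const _).const_add _).congr_deriv (by ring)
    -- the first s-derivative
    have hB : ∀ (s' z : ℝ), HasDerivAt (fun s'' => A s'' z) (Bm ξ₁ ξ₂ s' z) s' := by
      intro s' z
      have hfun : (fun s'' => A s'' z) = fun s'' =>
          !![Real.cos (ξ₁ s'') * Real.cos (ξ₂ s'') + tth z * (Real.sin (ξ₁ s'') * Real.sin (ξ₂ s'')),
             Real.cos (ξ₁ s'') * Real.sin (ξ₂ s'') - tth z * (Real.sin (ξ₁ s'') * Real.cos (ξ₂ s''));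
             Real.sin (ξ₁ s'') * Real.cos (ξ₂ s'') - tth z * (Real.cos (ξ₁ s'') * Real.sin (ξ₂ s'')),
             Real.sin (ξ₁ s'') * Real.sin (ξ₂ s'') + tth z * (Real.cos (ξ₁ s'') * Real.cos (ξ₂ s''))] :=
        funext fun s'' => hA' s'' z
      rw [hfun]
      simp only [Bm]
      refine hasDerivAt_mat2 ?_ ?_ ?_ ?_
      · exact (((hξ₁ s').cos.mul (hξ₂ s').cos).add
          (HasDerivAt.const_mul (tth z) ((hξ₁ s').sin.mul (hξ₂ s').sin))).congr_deriv (by ring)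
      · exact (((hξ₁ s').cos.mul (hξ₂ s').sin).sub
          (HasDerivAt.const_mul (tth z) ((hξ₁ s').sin.mul (hξ₂ s').cos))).congr_deriv (by ring)
      · exact (((hξ₁ s').sin.mul (hξ₂ s').cos).sub
          (HasDerivAt.const_mul (tth z) ((hξ₁ s').cos.mul (hξ₂ s').sin))).congr_deriv (by ring)
      · exact (((hξ₁ s').sin.mul (hξ₂ s').sin).add
          (HasDerivAt.const_mul (tth z) ((hξ₁ s').cos.mul (hξ₂ s').cos))).congr_deriv (by ring)
    -- the second s-derivative
    have hC : ∀ z : ℝ, HasDerivAt (fun s' => Bm ξ₁ ξ₂ s' z) (Cm ξ₁ ξ₂ s z) s := by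
      intro z
      simp only [Bm, Cm]
      refine hasDerivAt_mat2 ?_ ?_ ?_ ?_
      · exact (((((hξ₁' s).mul (hξ₁ s).sin).mul (hξ₂ s).cos).neg.sub
            (((hξ₂' s).mul (hξ₁ s).cos).mul (hξ₂ s).sin)).add
          (HasDerivAt.const_mul (tth z)
            (((((hξ₁' s).mul (hξ₁ s).cos).mul (hξ₂ s).sin)).add
              (((hξ₂' s).mul (hξ₁ s).sin).mul (hξ₂ s).cos)))).congr_deriv (by simp only [Pi.mul_apply]; ring)
      · exact (((((hξ₁' s).mul (hξ₁ s).sin).mul (hξ₂ s).sin).neg.add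
            (((hξ₂' s).mul (hξ₁ s).cos).mul (hξ₂ s).cos)).sub
          (HasDerivAt.const_mul (tth z)
            ((((hξ₁' s).mul (hξ₁ s).cos).mul (hξ₂ s).cos).sub
              (((hξ₂' s).mul (hξ₁ s).sin).mul (hξ₂ s).sin)))).congr_deriv (by simp only [Pi.mul_apply]; ring)
      · exact (((((hξ₁' s).mul (hξ₁ s).cos).mul (hξ₂ s).cos).sub
            (((hξ₂' s).mul (hξ₁ s).sin).mul (hξ₂ s).sin)).sub
          (HasDerivAt.const_mul (tth z)
            (((((hξ₁' s).mul (hξ₁ s).sin).mul (hξ₂ s).sin).neg).add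
              (((hξ₂' s).mul (hξ₁ s).cos).mul (hξ₂ s).cos)))).congr_deriv (by simp only [Pi.mul_apply]; ring)
      · exact (((((hξ₁' s).mul (hξ₁ s).cos).mul (hξ₂ s).sin).add
            (((hξ₂' s).mul (hξ₁ s).sin).mul (hξ₂ s).cos)).add
          (HasDerivAt.const_mul (tth z)
            (((((hξ₁' s).mul (hξ₁ s).sin).mul (hξ₂ s).cos).neg).sub
              (((hξ₂' s).mul (hξ₁ s).cos).mul (hξ₂ s).sin)))).congr_deriv (by simp only [Pi.mul_apply]; ring)
    have hD2 : ∀ z : ℝ, deriv (fun s' => deriv (fun s'' => A s'' z) s') s = Cm ξ₁ ξ₂ s z := by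
      intro z
      have h1 : (fun s' => deriv (fun s'' => A s'' z) s') = fun s' => Bm ξ₁ ξ₂ s' z :=
        funext fun s' => (hB s' z).deriv
      rw [h1]
      exact (hC z).deriv
    have key : ∀ z : ℝ, Matrix.trace ((Cm ξ₁ ξ₂ s z)ᵀ * Dm ξ₁ ξ₂ s z) =
        Td z * (2 * deriv ξ₁ s * deriv ξ₂ s) +
          tth z * Td z * (-((deriv ξ₁ s)^2 + (deriv ξ₂ s)^2)) := by
      intro z
      have h1 := Real.sin_sq_add_cos_sq (ξ₁ s)
      have h2 := Real.sin_sq_add_cos_sq (ξ₂ s)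
      simp only [Cm, Dm, Matrix.trace_fin_two, Matrix.mul_apply, Fin.sum_univ_two,
        Matrix.vecHead, Matrix.vecTail, Matrix.transpose_apply, Matrix.cons_val_zero,
        Matrix.cons_val_one, Matrix.head_cons, Matrix.of_apply, Matrix.cons_val',
        Matrix.head_fin_const, Function.comp]
      linear_combination
        (Td z * (2 * deriv ξ₁ s * deriv ξ₂ s - tth z * ((deriv ξ₁ s)^2 + (deriv ξ₂ s)^2)) *
          (Real.sin (ξ₂ s)^2 + Real.cos (ξ₂ s)^2)) * h1 +
        (Td z * (2 * deriv ξ₁ s * deriv ξ₂ s - tth z * ((deriv ξ₁ s)^2 + (deriv ξ₂ s)^2))) * h2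
    have hint : (fun z : ℝ =>
        Matrix.trace ((deriv (fun s' => deriv (fun s'' => A s'' z) s') s)ᵀ *
          deriv (fun z' => A s z') z)) =
        fun z : ℝ => Td z * (2 * deriv ξ₁ s * deriv ξ₂ s) +
          tth z * Td z * (-((deriv ξ₁ s)^2 + (deriv ξ₂ s)^2)) := by
      funext z
      rw [hD2 z, hDz]
      exact key z
    have hi1 : Integrable (fun z => Td z * (2 * deriv ξ₁ s * deriv ξ₂ s)) :=
      integrable_Td.mul_const _
    have hi2 : Integrable (fun z => tth z * Td z * (-((deriv ξ₁ s)^2 + (deriv ξ₂ s)^2))) :=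
      integrable_tth_Td.mul_const _
    constructor
    · rw [hint]; exact hi1.add hi2
    · rw [hint, integral_add hi1 hi2, integral_mul_const, integral_mul_const, integral_Td,
        integral_tth_Td]
      ring
  refine ⟨main, ?_⟩
  intro ηm ηp hm hp h1 h2 s
  have hp1 : deriv ξ₁ s = (deriv ηm s + deriv ηp s) / 2 := by
    rw [h1]
    exact (((hm s).add (hp s)).div_const 2).deriv
  have hp2 : deriv ξ₂ s = (deriv ηm s - deriv ηp s) / 2 := by
    rw [h2]
    exact (((hm s).sub (hp s)).div_const 2).deriv
  rw [(main s).2, hp1, hp2]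
  ring
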